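/- Let X be a set, f : Set X → Set X a function, τ : V → Set X a valuation, and ψ a finite conjunction ⋀_{i=1}^n ε_i(a_i ⇒ b_i) of literals over the conditional operator, where f satisfies a_i ⇒ b_i iff f(τ(a_i)) ⊆ τ(b_i). If f satisfies ψ, then there exist Y ⊆ X with |Y| ≤ n² + n and f_Y : Set Y → Set Y such that, under the restricted valuation τ_Y(a) = τ(a) ∩ Y, f_Y satisfies each positive literal a_i ⇒ b_i of ψ (i.e., f_Y(τ_Y(a_i)) ⊆ τ_Y(b_i)) and each negative literal ¬(a_i ⇒ b_i) of ψ (i.e., f_Y(τ_Y(a_i)) ⊄ τ_Y(b_i)). -/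

import Mathlib

/-- Restriction of a subset of `X` to a subset `Y ⊆ X` (as a subtype). -/
def restr {X : Type} (Y : Set X) (A : Set X) : Set Y := {y : Y | (y : X) ∈ A}

/-- A literal `(true, a, b)` stands for `a ⇒ b`, `(false, a, b)` for `¬(a ⇒ b)`;
`f` satisfies `a ⇒ b` under `τ` iff `f (τ a) ⊆ τ b`. -/
def ckLitSat {X V : Type} (f : Set X → Set X) (τ : V → Set X)
    (l : Bool × V × V) : Prop :=
  if l.1 then f (τ l.2.1) ⊆ τ l.2.2 else ¬ (f (τ l.2.1) ⊆ τ l.2.2)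

open Classical in
lemma encard_biUnion_le_of_subsingleton {ι X : Type} (t : Finset ι) (s : ι → Set X)
    (hs : ∀ i, (s i).encard ≤ 1) : (⋃ i ∈ t, s i).encard ≤ t.card := by
  classical
  induction t using Finset.induction with
  | empty => simp
  | insert a t' hx ih =>
    rw [Finset.set_biUnion_insert, Finset.card_insert_of_notMem hx]
    calc (s a ∪ ⋃ i ∈ t', s i).encard ≤ (s a).encard + (⋃ i ∈ t', s i).encard :=
          Set.encard_union_le _ _
      _ ≤ 1 + t'.card := add_le_add (hs a) ih
      _ = ((t'.card + 1 : ℕ) : ℕ∞) := by push_cast; ring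

theorem stmt6 {X V : Type} (f : Set X → Set X) (τ : V → Set X)
    (ψ : List (Bool × V × V)) (hsat : ∀ l ∈ ψ, ckLitSat f τ l) :
    ∃ Y : Set X, Y.Finite ∧ Y.ncard ≤ ψ.length ^ 2 + ψ.length ∧
      ∃ fY : Set Y → Set Y,
        ∀ l ∈ ψ, ckLitSat fY (fun a => restr Y (τ a)) l := by
  classical
  set n := ψ.length with hn
  set a : Fin n → V := fun i => (ψ.get i).2.1 with ha
  set b : Fin n → V := fun i => (ψ.get i).2.2 with hb
  -- witnesses separating τ (a i) from τ (a j)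
  set sep : Fin n → Fin n → Set X := fun i j =>
    if h : (τ (a i) \ τ (a j)).Nonempty then {h.choose} else ∅ with hsep
  -- witnesses for negative literals
  set neg : Fin n → Set X := fun i =>
    if h : (f (τ (a i)) \ τ (b i)).Nonempty then {h.choose} else ∅ with hneg
  set g : (Fin n × Fin n) ⊕ Fin n → Set X := fun p =>
    match p with
    | Sum.inl (i, j) => sep i j
    | Sum.inr i => neg i with hg
  have hg1 : ∀ p, (g p).encard ≤ 1 := by
    rintro (⟨i, j⟩ | i) <;> simp only [hg, hsep, hneg] <;> split <;>
      simp [Set.encard_singleton]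
  set Y : Set X := ⋃ p, g p with hY
  have hYcard : Y.encard ≤ (n ^ 2 + n : ℕ) := by
    have := encard_biUnion_le_of_subsingleton (Finset.univ : Finset ((Fin n × Fin n) ⊕ Fin n)) g hg1
    simp only [Finset.mem_univ, Set.iUnion_true, Finset.card_univ] at this
    calc Y.encard ≤ (Fintype.card ((Fin n × Fin n) ⊕ Fin n) : ℕ∞) := by
          simpa [hY] using this
      _ = ((n ^ 2 + n : ℕ) : ℕ∞) := by simp [Fintype.card_sum, Fintype.card_prod]; ring
  have hYfin : Y.Finite := Set.finite_of_encard_le_coe hYcard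
  have hYn : Y.ncard ≤ n ^ 2 + n := by
    obtain ⟨hf, m, hm, hmle⟩ := Set.encard_le_coe_iff.mp hYcard
    rw [Set.ncard_def, hm]
    exact_mod_cast hmle
  -- separation property
  have hsepY : ∀ i j : Fin n, restr Y (τ (a i)) = restr Y (τ (a j)) → τ (a i) = τ (a j) := by
    intro i j hij
    by_contra hne
    have key : ∀ i j : Fin n, restr Y (τ (a i)) = restr Y (τ (a j)) →
        (τ (a i) \ τ (a j)).Nonempty → False := by
      intro i j hij h
      have hw : h.choose ∈ τ (a i) \ τ (a j) := h.choose_spec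
      have hwY : h.choose ∈ Y := by
        apply Set.mem_iUnion.mpr ⟨Sum.inl (i, j), ?_⟩
        simp [hg, hsep, h]
      have : (⟨h.choose, hwY⟩ : Y) ∈ restr Y (τ (a i)) := hw.1
      rw [hij] at this
      exact hw.2 this
    rcases Set.not_subset.mp (fun hc => hne (Set.Subset.antisymm hc (by
        by_contra hc2
        obtain ⟨x, hx1, hx2⟩ := Set.not_subset.mp hc2
        exact key j i hij.symm ⟨x, hx1, hx2⟩))) with ⟨x, hx1, hx2⟩
    exact key i j hij ⟨x, hx1, hx2⟩
  -- the selection function on Y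
  set fY : Set Y → Set Y := fun S =>
    {y : Y | ∃ i : Fin n, restr Y (τ (a i)) = S ∧ (y : X) ∈ f (τ (a i))} with hfY
  refine ⟨Y, hYfin, by simpa using hYn, fY, ?_⟩
  intro l hl
  obtain ⟨i, hi⟩ := List.get_of_mem hl
  have hai : l.2.1 = a i := by show l.2.1 = (ψ.get i).2.1; rw [hi]
  have hbi : l.2.2 = b i := by show l.2.2 = (ψ.get i).2.2; rw [hi]
  have hsi := hsat l hl
  unfold ckLitSat at hsi ⊢
  rcases Bool.eq_false_or_eq_true l.1 with hpos | hpos <;>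
    rw [hpos] at hsi ⊢ <;> simp only [Bool.false_eq_true, if_false, if_true] at hsi ⊢
  · -- positive literal
    rw [hai, hbi] at hsi ⊢
    rintro y ⟨j, hj, hyj⟩
    have : τ (a j) = τ (a i) := hsepY j i hj
    rw [this] at hyj
    exact hsi hyj
  · -- negative literal
    rw [hai, hbi] at hsi ⊢
    have h : (f (τ (a i)) \ τ (b i)).Nonempty := by
      obtain ⟨x, hx1, hx2⟩ := Set.not_subset.mp hsi
      exact ⟨x, hx1, hx2⟩
    have hw : h.choose ∈ f (τ (a i)) \ τ (b i) := h.choose_spec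
    have hwY : h.choose ∈ Y := by
      apply Set.mem_iUnion.mpr ⟨Sum.inr i, ?_⟩
      simp [hg, hneg, h]
    intro hc
    have hmem : (⟨h.choose, hwY⟩ : Y) ∈ fY (restr Y (τ (a i))) := ⟨i, rfl, hw.1⟩
    exact hw.2 (hc hmem)
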